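/- Simple (q,p)-shuffles other than the exceptional one with σ = [0,...,0,1,...,p] are in bijection with pairs (a, b) with 0 ≤ a ≤ q−1 and a+1 ≤ b ≤ a+p; in particular the number of simple (q,p)-shuffles is pq + 1. -/
import Mathlib


/-- The exceptional `(q,p)`-shuffle `σ = [0,...,0,1,...,p]` (as the `σ`-component;
recall that a shuffle is determined by its `σ`-component). -/
def exceptionalShuffle (p q : ℕ) : Fin (p + q + 1) →o Fin (p + 1) :=
  ⟨fun j => ⟨j.1 - q, by have := j.isLt; omega⟩, fun a b hab => by
    have h2 : (a : ℕ) ≤ b := hab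
    simp only [Fin.mk_le_mk]
    omega⟩

/-- A `(q,p)`-shuffle (given by its `σ`-component, a surjective monotone map
`σ : {0,...,p+q} → {0,...,p}`) is *simple* if there are `a ≤ b ≤ c` with `σ(a) = 0`,
`σ` strictly increasing on `[a,b]` (i.e. `σ ∘ [a,...,b]` non-degenerate), `σ` constant
on `[b,c]`, and `σ` strictly increasing on `[c, p+q]`. -/
def IsSimpleShuffle (p q : ℕ) (σ : Fin (p + q + 1) →o Fin (p + 1)) : Prop :=
  ∃ a b c : Fin (p + q + 1), a ≤ b ∧ b ≤ c ∧ σ a = 0 ∧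
    (∀ i j : Fin (p + q + 1), a ≤ i → i < j → j ≤ b → σ i < σ j) ∧
    (∀ i : Fin (p + q + 1), b ≤ i → i ≤ c → σ i = σ b) ∧
    (∀ i j : Fin (p + q + 1), c ≤ i → i < j → σ i < σ j)

namespace St18

def F (p q a b j : ℕ) : ℕ := min p (min (j - a) (max (b - a) (j - q)))

def mk (p q a b : ℕ) : Fin (p + q + 1) →o Fin (p + 1) :=
  ⟨fun j => ⟨F p q a b j.1, by unfold F; omega⟩,
   fun i j hij => by
     have h2 : (i : ℕ) ≤ j := hij
     simp only [Fin.mk_le_mk]; unfold F; omega⟩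

lemma mk_apply (p q a b : ℕ) (j : Fin (p + q + 1)) :
    (mk p q a b j).1 = F p q a b j.1 := rfl

lemma exc_apply (p q : ℕ) (j : Fin (p + q + 1)) :
    (exceptionalShuffle p q j).1 = j.1 - q := rfl

lemma mk_surj (p q a b : ℕ) (ha : a ≤ q) (hab : a ≤ b) (hb : b ≤ a + p) :
    Function.Surjective (mk p q a b) := by
  intro k
  have hk := k.isLt
  rcases le_or_gt k.1 (b - a) with h | h
  · exact ⟨⟨a + k.1, by omega⟩, Fin.ext (by rw [mk_apply]; unfold F; simp only; omega)⟩
  · exact ⟨⟨k.1 + q, by omega⟩, Fin.ext (by rw [mk_apply]; unfold F; simp only; omega)⟩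

lemma mk_simple (p q a b : ℕ) (haq : a < q) (hab : a < b) (hb : b ≤ a + p) :
    IsSimpleShuffle p q (mk p q a b) := by
  refine ⟨⟨a, by omega⟩, ⟨b, by omega⟩, ⟨b - a + q, by omega⟩,
    by simp [Fin.le_def]; omega, by simp [Fin.le_def]; omega, ?_, ?_, ?_, ?_⟩
  · exact Fin.ext (by rw [mk_apply]; unfold F; simp only [Fin.val_zero]; omega)
  · intro i j hi hij hj
    rw [Fin.le_def] at hi hj
    rw [Fin.lt_def] at hij ⊢
    rw [mk_apply, mk_apply]
    simp only [Fin.val_mk] at *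
    unfold F; omega
  · intro i hi hic
    rw [Fin.le_def] at hi hic
    refine Fin.ext ?_
    rw [mk_apply, mk_apply]
    simp only [Fin.val_mk] at *
    have := i.isLt
    unfold F; omega
  · intro i j hi hij
    rw [Fin.le_def] at hi
    rw [Fin.lt_def] at hij ⊢
    rw [mk_apply, mk_apply]
    simp only [Fin.val_mk] at *
    have := j.isLt
    unfold F; omega

lemma exc_surj (p q : ℕ) : Function.Surjective (exceptionalShuffle p q) := by
  intro k
  have hk := k.isLt
  exact ⟨⟨k.1 + q, by omega⟩, Fin.ext (by rw [exc_apply]; simp only; omega)⟩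

lemma exc_simple (p q : ℕ) : IsSimpleShuffle p q (exceptionalShuffle p q) := by
  refine ⟨0, 0, ⟨q, by omega⟩, le_refl _, by simp [Fin.le_def], ?_, ?_, ?_, ?_⟩
  · exact Fin.ext (by rw [exc_apply]; simp)
  · intro i j hi hij hj
    rw [Fin.le_def] at hj
    rw [Fin.lt_def] at hij
    simp only [Fin.val_zero] at hj
    omega
  · intro i hi hic
    rw [Fin.le_def] at hi hic
    refine Fin.ext ?_
    rw [exc_apply, exc_apply]
    simp only [Fin.val_mk, Fin.val_zero] at *
    omega
  · intro i j hi hij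
    rw [Fin.le_def] at hi
    rw [Fin.lt_def] at hij ⊢
    rw [exc_apply, exc_apply]
    simp only [Fin.val_mk] at *
    omega

lemma mk_ne_exc (p q a b : ℕ) (haq : a < q) (hab : a < b) (hb : b ≤ a + p) :
    mk p q a b ≠ exceptionalShuffle p q := by
  intro h
  have h1 : (mk p q a b ⟨a + 1, by omega⟩).1 = (exceptionalShuffle p q ⟨a + 1, by omega⟩).1 := by
    rw [h]
  rw [mk_apply, exc_apply] at h1
  simp only [Fin.val_mk] at h1
  unfold F at h1; omega

lemma mk_inj (p q a b a' b' : ℕ) (haq : a < q) (hab : a < b) (hb : b ≤ a + p)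
    (haq' : a' < q) (hab' : a' < b') (hb' : b' ≤ a' + p)
    (h : mk p q a b = mk p q a' b') : a = a' ∧ b = b' := by
  have hv : ∀ j : Fin (p + q + 1), F p q a b j.1 = F p q a' b' j.1 := fun j => by
    rw [← mk_apply, ← mk_apply, h]
  have h1 := hv ⟨a + 1, by omega⟩
  have h2 := hv ⟨a' + 1, by omega⟩
  have h3 := hv ⟨b + 1, by omega⟩
  have h4 := hv ⟨b' + 1, by omega⟩
  simp only [Fin.val_mk] at h1 h2 h3 h4
  unfold F at h1 h2 h3 h4
  have ha : a = a' := by clear h3 h4; omega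
  subst ha
  refine ⟨rfl, ?_⟩
  clear h1 h2
  omega

end St18

namespace St18

lemma classify (p q : ℕ) (σ : Fin (p + q + 1) →o Fin (p + 1))
    (hs : Function.Surjective σ) (hsim : IsSimpleShuffle p q σ) :
    σ = exceptionalShuffle p q ∨
      ∃ a b : ℕ, a < q ∧ a < b ∧ b ≤ a + p ∧ σ = mk p q a b := by
  obtain ⟨a, b, c, hab, hbc, h0, h1, h2, h3⟩ := hsim
  set A := a.1 with hA
  set B := b.1 with hB
  set C := c.1 with hC
  have hCN : C ≤ p + q := by have := c.isLt; omega
  have hAB : A ≤ B := hab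
  have hBC : B ≤ C := hbc
  -- the ℕ-valued version of σ
  set v : ℕ → ℕ := fun j => (σ ⟨min j (p + q), by omega⟩).1 with hv
  have hveq : ∀ j : Fin (p + q + 1), (σ j).1 = v j.1 := by
    intro j
    have hj := j.isLt
    have he : (⟨min j.1 (p + q), by omega⟩ : Fin (p + q + 1)) = j :=
      Fin.ext (by simp only [Fin.val_mk]; omega)
    simp only [hv]
    rw [he]
  have hle : ∀ j, v j ≤ p := by
    intro j
    simp only [hv]
    exact Nat.lt_succ_iff.mp (σ _).isLt
  have hmono : ∀ i j, i ≤ j → v i ≤ v j := by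
    intro i j hij
    exact σ.monotone (by rw [Fin.le_def]; simp only [Fin.val_mk]; omega)
  have hstep : ∀ j, j < p + q → v (j + 1) ≤ v j + 1 := by
    intro j hj
    by_contra hcon
    push_neg at hcon
    obtain ⟨i, hi⟩ := hs ⟨v j + 1, by have := hle (j + 1); omega⟩
    have hival : (σ i).1 = v j + 1 := by rw [hi]
    rw [hveq i] at hival
    rcases le_or_gt i.1 j with h | h
    · have := hmono i.1 j h; omega
    · have := hmono (j + 1) i.1 h; omega
  have hv0 : v A = 0 := by
    have : (σ a).1 = 0 := by rw [h0]; rfl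
    rw [hveq a] at this; exact this
  have h1' : ∀ i j, A ≤ i → i < j → j ≤ B → v i < v j := by
    intro i j hi hij hj
    have hjN : j < p + q + 1 := by have := b.isLt; omega
    have := h1 ⟨i, by omega⟩ ⟨j, hjN⟩ (by rw [Fin.le_def]; exact hi)
      (by rw [Fin.lt_def]; exact hij) (by rw [Fin.le_def]; exact hj)
    rw [Fin.lt_def] at this
    simp only [hveq, Fin.val_mk] at this
    exact this
  have h2' : ∀ i, B ≤ i → i ≤ C → v i = v B := by
    intro i hi hic
    have hiN : i < p + q + 1 := by omega
    have := h2 ⟨i, hiN⟩ (by rw [Fin.le_def]; exact hi) (by rw [Fin.le_def]; exact hic)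
    have := congrArg Fin.val this
    simp only [hveq, Fin.val_mk] at this
    exact this
  have h3' : ∀ i j, C ≤ i → i < j → j ≤ p + q → v i < v j := by
    intro i j hi hij hj
    have := h3 ⟨i, by omega⟩ ⟨j, by omega⟩ (by rw [Fin.le_def]; exact hi)
      (by rw [Fin.lt_def]; exact hij)
    rw [Fin.lt_def] at this
    simp only [hveq, Fin.val_mk] at this
    exact this
  -- region computations
  have r1 : ∀ j, j ≤ A → v j = 0 := by
    intro j hj
    have := hmono j A hj; omega
  have r2 : ∀ j, A ≤ j → j ≤ B → v j = j - A := by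
    intro j hj hjB
    induction j with
    | zero => have : A = 0 := by omega
              rw [this] at hv0 ⊢; simpa using hv0
    | succ n ih =>
      rcases Nat.lt_or_ge A (n + 1) with h | h
      · have hn := ih (by omega) (by omega)
        have hlt := h1' n (n + 1) (by omega) (by omega) hjB
        have hst := hstep n (by have := b.isLt; omega)
        omega
      · have : A = n + 1 := by omega
        rw [this] at hv0 ⊢; omega
  have r3 : ∀ j, B ≤ j → j ≤ C → v j = B - A := by
    intro j hj hjc
    rw [h2' j hj hjc, r2 B hAB le_rfl]
  have r4 : ∀ j, C ≤ j → j ≤ p + q → v j = (B - A) + (j - C) := by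
    intro j hj hjN
    induction j with
    | zero => have : C = 0 := by omega
              have := r3 0 (by omega) (by omega); omega
    | succ n ih =>
      rcases Nat.lt_or_ge C (n + 1) with h | h
      · have hn := ih (by omega) (by omega)
        have hlt := h3' n (n + 1) (by omega) (by omega) hjN
        have hst := hstep n (by omega)
        omega
      · have hcn : C = n + 1 := by omega
        have := r3 (n + 1) (by omega) (by omega); omega
  have htop : v (p + q) = p := by
    obtain ⟨i, hi⟩ := hs ⟨p, by omega⟩
    have hival : (σ i).1 = p := by rw [hi]
    rw [hveq i] at hival
    have := hmono i.1 (p + q) (by have := i.isLt; omega)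
    have := hle (p + q)
    omega
  have hBAp : B - A ≤ p := by have := hle B; have := r2 B hAB le_rfl; omega
  have hCq : C = (B - A) + q := by
    have := r4 (p + q) hCN le_rfl
    omega
  by_cases hcase : A < q ∧ A < B
  · right
    refine ⟨A, B, hcase.1, hcase.2, by omega, ?_⟩
    refine DFunLike.ext _ _ fun j => Fin.ext ?_
    rw [hveq, mk_apply]
    have hj := j.isLt
    unfold F
    rcases le_or_gt j.1 A with h | h
    · rw [r1 j.1 h]; omega
    rcases le_or_gt j.1 B with h' | h'
    · rw [r2 j.1 (by omega) h']; omega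
    rcases le_or_gt j.1 C with h'' | h''
    · rw [r3 j.1 (by omega) h'']; omega
    · rw [r4 j.1 (by omega) (by omega)]; omega
  · left
    refine DFunLike.ext _ _ fun j => Fin.ext ?_
    rw [hveq, exc_apply]
    have hj := j.isLt
    have hAq : A ≤ q := by omega
    rcases le_or_gt j.1 A with h | h
    · rw [r1 j.1 h]; omega
    rcases le_or_gt j.1 B with h' | h'
    · rw [r2 j.1 (by omega) h']; omega
    rcases le_or_gt j.1 C with h'' | h''
    · rw [r3 j.1 (by omega) h'']; omega
    · rw [r4 j.1 (by omega) (by omega)]; omega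

end St18

namespace St18

def pairEquiv (p q : ℕ) :
    {ab : ℕ × ℕ // ab.1 < q ∧ ab.1 < ab.2 ∧ ab.2 ≤ ab.1 + p} ≃ Fin q × Fin p where
  toFun x := (⟨x.1.1, x.2.1⟩, ⟨x.1.2 - x.1.1 - 1, by obtain ⟨h1, h2, h3⟩ := x.2; omega⟩)
  invFun y := ⟨(y.1.1, y.1.1 + y.2.1 + 1), y.1.isLt, by omega, by have := y.2.isLt; omega⟩
  left_inv := by
    rintro ⟨⟨a, b⟩, h1, h2, h3⟩
    simp only [Subtype.mk.injEq, Prod.mk.injEq, Fin.val_mk]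
    exact ⟨trivial, by omega⟩
  right_inv := by
    rintro ⟨i, k⟩
    refine Prod.ext (Fin.ext ?_) (Fin.ext ?_) <;> simp only [Fin.val_mk] <;> omega

end St18


/-- Simple `(q,p)`-shuffles other than the exceptional one `σ = [0,...,0,1,...,p]` are
in bijection with pairs `(a, b)` with `0 ≤ a ≤ q - 1` and `a + 1 ≤ b ≤ a + p`;
in particular the number of simple `(q,p)`-shuffles is `pq + 1`. -/
theorem statement18 (p q : ℕ) :
    Nonempty (
      {σ : Fin (p + q + 1) →o Fin (p + 1) //
        Function.Surjective σ ∧ IsSimpleShuffle p q σ ∧ σ ≠ exceptionalShuffle p q}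
      ≃ {ab : ℕ × ℕ // ab.1 < q ∧ ab.1 < ab.2 ∧ ab.2 ≤ ab.1 + p}) ∧
    Nat.card {σ : Fin (p + q + 1) →o Fin (p + 1) //
        Function.Surjective σ ∧ IsSimpleShuffle p q σ} = p * q + 1 := by
  constructor
  · -- the bijection
    set f : {ab : ℕ × ℕ // ab.1 < q ∧ ab.1 < ab.2 ∧ ab.2 ≤ ab.1 + p} →
        {σ : Fin (p + q + 1) →o Fin (p + 1) //
          Function.Surjective σ ∧ IsSimpleShuffle p q σ ∧ σ ≠ exceptionalShuffle p q} :=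
      fun x => ⟨St18.mk p q x.1.1 x.1.2,
        St18.mk_surj p q x.1.1 x.1.2 (by omega) (by have := x.2.2.1; omega) x.2.2.2,
        St18.mk_simple p q x.1.1 x.1.2 x.2.1 x.2.2.1 x.2.2.2,
        St18.mk_ne_exc p q x.1.1 x.1.2 x.2.1 x.2.2.1 x.2.2.2⟩ with hf
    have hinj : Function.Injective f := by
      rintro ⟨⟨a, b⟩, h1, h2, h3⟩ ⟨⟨a', b'⟩, h1', h2', h3'⟩ heq
      have heq' : St18.mk p q a b = St18.mk p q a' b' := congrArg Subtype.val heq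
      have := St18.mk_inj p q a b a' b' h1 h2 h3 h1' h2' h3' heq'
      simp only [Subtype.mk.injEq, Prod.mk.injEq]
      exact this
    have hsurjf : Function.Surjective f := by
      rintro ⟨σ, hs, hsim, hne⟩
      rcases St18.classify p q σ hs hsim with h | ⟨a, b, haq, hab, hb, hσ⟩
      · exact absurd h hne
      · exact ⟨⟨(a, b), haq, hab, hb⟩, Subtype.ext hσ.symm⟩
    exact ⟨(Equiv.ofBijective f ⟨hinj, hsurjf⟩).symm⟩
  · -- the cardinality
    set T := {ab : ℕ × ℕ // ab.1 < q ∧ ab.1 < ab.2 ∧ ab.2 ≤ ab.1 + p} with hT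
    set g : T ⊕ Unit → {σ : Fin (p + q + 1) →o Fin (p + 1) //
        Function.Surjective σ ∧ IsSimpleShuffle p q σ} :=
      fun x => match x with
        | .inl x => ⟨St18.mk p q x.1.1 x.1.2,
            St18.mk_surj p q x.1.1 x.1.2 (by omega) (by have := x.2.2.1; omega) x.2.2.2,
            St18.mk_simple p q x.1.1 x.1.2 x.2.1 x.2.2.1 x.2.2.2⟩
        | .inr _ => ⟨exceptionalShuffle p q, St18.exc_surj p q, St18.exc_simple p q⟩ with hg
    have hbij : Function.Bijective g := by
      constructor
      · rintro (⟨⟨a, b⟩, h1, h2, h3⟩ | ⟨⟩) (⟨⟨a', b'⟩, h1', h2', h3'⟩ | ⟨⟩) heq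
        · have heq' : St18.mk p q a b = St18.mk p q a' b' := congrArg Subtype.val heq
          have := St18.mk_inj p q a b a' b' h1 h2 h3 h1' h2' h3' heq'
          obtain ⟨rfl, rfl⟩ := this
          rfl
        · exact absurd (congrArg Subtype.val heq) (St18.mk_ne_exc p q a b h1 h2 h3)
        · exact absurd (congrArg Subtype.val heq).symm (St18.mk_ne_exc p q a' b' h1' h2' h3')
        · rfl
      · rintro ⟨σ, hs, hsim⟩
        rcases St18.classify p q σ hs hsim with h | ⟨a, b, haq, hab, hb, hσ⟩
        · exact ⟨.inr ⟨⟩, Subtype.ext h.symm⟩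
        · exact ⟨.inl ⟨(a, b), haq, hab, hb⟩, Subtype.ext hσ.symm⟩
    have hTcard : Nat.card T = q * p := by
      rw [Nat.card_congr (St18.pairEquiv p q), Nat.card_prod, Nat.card_eq_fintype_card,
        Nat.card_eq_fintype_card, Fintype.card_fin, Fintype.card_fin]
    rw [← Nat.card_eq_of_bijective g hbij]
    haveI : Finite T := Finite.of_equiv _ (St18.pairEquiv p q).symm
    rw [Nat.card_sum, hTcard, Nat.card_unique, Nat.mul_comm]
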